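/- For every natural number k ≥ 1 there exist polynomials ρ, β₁, β₂ in two variables s, t — with ρ and β₁ having real coefficients and β₂ having purely imaginary coefficients — such that (t - s)·ρ(s,t)² + s^(2k-1) = t^k·(β₁(s,t)² + β₂(s,t)²) for all (s,t) ∈ ℂ², and ρ(1,t) > 0 for all real t ≥ 0. -/

import Mathlib

noncomputable def cc : ℕ → ℝ
  | 0 => 1
  | n+1 => cc n * (2*n+1) / (2*n+2)

lemma cc_pos : ∀ n, 0 < cc n
  | 0 => one_pos
  | n+1 => by
    have := cc_pos n
    unfold cc
    positivity

lemma cc_rec (n : ℕ) : ((n:ℝ)+1) * cc (n+1) = ((n:ℝ) + 1/2) * cc n := by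
  show ((n:ℝ)+1) * (cc n * (2*n+1) / (2*n+2)) = _
  have h : (2*(n:ℝ)+2) ≠ 0 := by positivity
  field_simp

lemma cc_conv (m : ℕ) :
    ∑ a ∈ Finset.range (m+1), cc a * cc (m - a) = 1 := by
  induction m with
  | zero => simp [cc]
  | succ m ih =>
    set S := ∑ a ∈ Finset.range (m+1), cc a * cc (m - a) with hS
    -- T_n = Σ_{a<n+1} a c_a c_{n-a}
    have sym : ∀ n : ℕ, ∑ a ∈ Finset.range (n+1), (a:ℝ) * (cc a * cc (n - a))
        = ∑ a ∈ Finset.range (n+1), ((n:ℝ) - a) * (cc a * cc (n - a)) := by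
      intro n
      rw [← Finset.sum_range_reflect]
      apply Finset.sum_congr rfl
      intro a ha
      simp only [Finset.mem_range] at ha
      have ha' : a ≤ n := Nat.lt_succ_iff.mp ha
      have h1 : n + 1 - 1 - a = n - a := by omega
      have h2 : n - (n - a) = a := by omega
      rw [h1, h2]
      have : ((n - a : ℕ) : ℝ) = (n:ℝ) - a := by
        push_cast [ha']; ring
      rw [this]
      ring
    have two_T : ∀ n : ℕ, 2 * (∑ a ∈ Finset.range (n+1), (a:ℝ) * (cc a * cc (n - a)))
        = (n:ℝ) * ∑ a ∈ Finset.range (n+1), cc a * cc (n - a) := by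
      intro n
      have := sym n
      have expand : ∑ a ∈ Finset.range (n+1), ((n:ℝ) - a) * (cc a * cc (n - a))
          = (n:ℝ) * (∑ a ∈ Finset.range (n+1), cc a * cc (n - a))
            - ∑ a ∈ Finset.range (n+1), (a:ℝ) * (cc a * cc (n - a)) := by
        rw [Finset.mul_sum, ← Finset.sum_sub_distrib]
        apply Finset.sum_congr rfl
        intro a _; ring
      linarith [this, expand]
    -- T_{m+1} via shifting
    have shift : ∑ a ∈ Finset.range (m+2), (a:ℝ) * (cc a * cc (m+1 - a))
        = ∑ b ∈ Finset.range (m+1), ((b:ℝ)+1) * (cc (b+1) * cc (m - b)) := by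
      rw [Finset.sum_range_succ' (fun a => (a:ℝ) * (cc a * cc (m+1 - a))) (m+1)]
      simp only [Nat.cast_zero, zero_mul, add_zero]
      apply Finset.sum_congr rfl
      intro b _
      have : m + 1 - (b+1) = m - b := by omega
      rw [this]
      push_cast
      ring
    have Tval : ∑ a ∈ Finset.range (m+2), (a:ℝ) * (cc a * cc (m+1 - a))
        = ((m:ℝ)/2) * S + S/2 := by
      rw [shift]
      have : ∀ b ∈ Finset.range (m+1), ((b:ℝ)+1) * (cc (b+1) * cc (m - b))
          = ((b:ℝ) + 1/2) * (cc b * cc (m - b)) := by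
        intro b _
        have := cc_rec b
        calc ((b:ℝ)+1) * (cc (b+1) * cc (m - b)) = (((b:ℝ)+1) * cc (b+1)) * cc (m-b) := by ring
        _ = (((b:ℝ) + 1/2) * cc b) * cc (m-b) := by rw [this]
        _ = ((b:ℝ) + 1/2) * (cc b * cc (m - b)) := by ring
      rw [Finset.sum_congr rfl this]
      have e1 : ∑ b ∈ Finset.range (m+1), ((b:ℝ) + 1/2) * (cc b * cc (m - b))
          = (∑ b ∈ Finset.range (m+1), (b:ℝ) * (cc b * cc (m - b))) + S/2 := by
        rw [hS, Finset.sum_div, ← Finset.sum_add_distrib]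
        apply Finset.sum_congr rfl; intro a _; ring
      rw [e1]
      have := two_T m
      rw [← hS] at this
      linarith
    have key := two_T (m+1)
    rw [Tval, ih] at key
    have hm : ((m:ℝ)+1) ≠ 0 := by positivity
    apply mul_left_cancel₀ hm
    push_cast at key ⊢
    linarith

open Polynomial in
noncomputable def pp (k' : ℕ) : Polynomial ℝ :=
  ∑ n ∈ Finset.range (k'+1), C (cc n) * X^n

open Polynomial in
lemma pp_coeff (k' n : ℕ) : (pp k').coeff n = if n < k'+1 then cc n else 0 := by
  simp [pp, Polynomial.finset_sum_coeff, Polynomial.coeff_C_mul, Polynomial.coeff_X_pow]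

open Polynomial in
lemma pp_natDegree (k' : ℕ) : (pp k').natDegree ≤ k' := by
  apply Polynomial.natDegree_sum_le_of_forall_le
  intro i hi
  exact le_trans (Polynomial.natDegree_C_mul_X_pow_le _ _) (Nat.lt_succ_iff.mp (Finset.mem_range.mp hi))

open Polynomial in
lemma pp_eval (k' : ℕ) (x : ℝ) : (pp k').eval x = ∑ n ∈ Finset.range (k'+1), cc n * x^n := by
  simp [pp, Polynomial.eval_finset_sum]

open Polynomial in
lemma pp_sq_coeff (k' m : ℕ) (hm : m ≤ k') : ((pp k')^2).coeff m = 1 := by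
  rw [sq, Polynomial.coeff_mul, Finset.Nat.sum_antidiagonal_eq_sum_range_succ_mk]
  rw [← cc_conv m]
  apply Finset.sum_congr rfl
  intro a ha
  simp only [Finset.mem_range] at ha
  rw [pp_coeff, pp_coeff, if_pos (by omega), if_pos (by omega)]

open Polynomial in
lemma key_dvd (k' : ℕ) : X^(k'+1) ∣ (X - 1) * (pp k')^2 + 1 := by
  rw [Polynomial.X_pow_dvd_iff]
  intro d hd
  rw [sub_mul, one_mul]
  simp only [Polynomial.coeff_add, Polynomial.coeff_sub]
  match d with
  | 0 =>
    simp only [Polynomial.coeff_one, Polynomial.mul_coeff_zero, Polynomial.coeff_X_zero, zero_mul]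
    rw [pp_sq_coeff k' 0 (by omega)]
    norm_num
  | n+1 =>
    rw [Polynomial.coeff_X_mul, pp_sq_coeff k' n (by omega), pp_sq_coeff k' (n+1) (by omega)]
    simp [Polynomial.coeff_one]

noncomputable def hpoly (q : Polynomial ℝ) (k' : ℕ) : MvPolynomial (Fin 2) ℝ :=
  ∑ n ∈ Finset.range (k'+1),
    MvPolynomial.C (q.coeff n) * MvPolynomial.X 0 ^ (k' - n) * MvPolynomial.X 1 ^ n

lemma eval_map_hpoly (q : Polynomial ℝ) (k' : ℕ) (s t : ℂ) :
    MvPolynomial.eval ![s, t] (MvPolynomial.map (algebraMap ℝ ℂ) (hpoly q k')) =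
      ∑ n ∈ Finset.range (k'+1), (q.coeff n : ℂ) * s ^ (k' - n) * t ^ n := by
  rw [MvPolynomial.eval_map, ← MvPolynomial.aeval_def]
  simp [hpoly, map_sum, Matrix.cons_val_zero, Matrix.cons_val_one, Matrix.head_cons]

lemma im_coeff (q : MvPolynomial (Fin 2) ℝ) (n : Fin 2 →₀ ℕ) :
    ((MvPolynomial.map (algebraMap ℝ ℂ) q).coeff n).im = 0 := by
  rw [MvPolynomial.coeff_map]
  simp

open Polynomial in
lemma eval_univ (q : Polynomial ℝ) (k' : ℕ) (h : q.natDegree ≤ k') (x : ℂ) :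
    (q.map (algebraMap ℝ ℂ)).eval x = ∑ n ∈ Finset.range (k'+1), (q.coeff n : ℂ) * x ^ n := by
  rw [Polynomial.eval_eq_sum_range'
    (lt_of_le_of_lt Polynomial.natDegree_map_le (Nat.lt_succ_of_le h))]
  simp [Polynomial.coeff_map]

open Polynomial in
lemma main_id (k' : ℕ) (a : Polynomial ℝ)
    (ha : (X - 1) * (pp k')^2 + 1 = X^(k'+1) * a) (hdeg : a.natDegree ≤ k') (t : ℂ) :
    (fun s : ℂ => (t - s) * (∑ n ∈ Finset.range (k'+1),
        ((pp k').coeff n : ℂ) * s ^ (k' - n) * t ^ n) ^ 2 + s ^ (2*k'+1))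
    = fun s : ℂ => t ^ (k'+1) * ∑ n ∈ Finset.range (k'+1),
        (a.coeff n : ℂ) * s ^ (k' - n) * t ^ n := by
  have haC : (X - 1) * ((pp k').map (algebraMap ℝ ℂ))^2 + 1
      = X^(k'+1) * (a.map (algebraMap ℝ ℂ)) := by
    have := congrArg (Polynomial.map (algebraMap ℝ ℂ)) ha
    simpa using this
  apply Continuous.ext_on (dense_compl_singleton (0:ℂ))
  · apply Continuous.add
    · apply Continuous.mul (by fun_prop)
      apply Continuous.pow
      apply continuous_finset_sum
      intro n _
      fun_prop
    · fun_prop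
  · apply Continuous.mul continuous_const
    apply continuous_finset_sum
    intro n _
    fun_prop
  · intro s hs
    have hs : s ≠ 0 := hs
    set x := t / s with hxdef
    have ht : x * s = t := div_mul_cancel₀ t hs
    have hx := congrArg (Polynomial.eval x) haC
    simp only [Polynomial.eval_add, Polynomial.eval_mul, Polynomial.eval_pow,
      Polynomial.eval_sub, Polynomial.eval_X, Polynomial.eval_one] at hx
    rw [eval_univ (pp k') k' (pp_natDegree k'), eval_univ a k' hdeg] at hx
    have hsum : ∀ f : ℕ → ℝ, (∑ n ∈ Finset.range (k'+1), (f n : ℂ) * s ^ (k' - n) * t ^ n)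
        = s ^ k' * ∑ n ∈ Finset.range (k'+1), (f n : ℂ) * x ^ n := by
      intro f
      rw [Finset.mul_sum]
      apply Finset.sum_congr rfl
      intro n hn
      have hn' : n ≤ k' := Nat.lt_succ_iff.mp (Finset.mem_range.mp hn)
      have hpow : s ^ (k' - n) * s ^ n = s ^ k' := pow_sub_mul_pow s hn'
      rw [← ht, mul_pow]
      linear_combination ((f n : ℂ) * x ^ n) * hpow
    simp only [hsum]
    rw [← ht]
    rw [pow_succ x] at hx
    have e1 : s ^ (2*k'+1) = s ^ k' * s ^ k' * s := by
      rw [two_mul, pow_succ, pow_add]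
    have e2 : (x * s) ^ (k'+1) = x ^ k' * x * (s ^ k' * s) := by
      rw [mul_pow, pow_succ x, pow_succ s]; try ring
    rw [e1, e2]
    linear_combination (s ^ k' * s ^ k' * s) * hx

open Polynomial in
theorem stmt_2 (k : ℕ) (hk : 1 ≤ k) :
    ∃ ρ β₁ β₂ : MvPolynomial (Fin 2) ℂ,
      (∀ n, (ρ.coeff n).im = 0) ∧
      (∀ n, (β₁.coeff n).im = 0) ∧
      (∀ n, (β₂.coeff n).re = 0) ∧
      (∀ s t : ℂ,
        (t - s) * (MvPolynomial.eval ![s, t] ρ) ^ 2 + s ^ (2 * k - 1) =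
          t ^ k * ((MvPolynomial.eval ![s, t] β₁) ^ 2 +
            (MvPolynomial.eval ![s, t] β₂) ^ 2)) ∧
      (∀ t : ℝ, 0 ≤ t → ∃ c : ℝ, 0 < c ∧
        MvPolynomial.eval ![1, (t : ℂ)] ρ = (c : ℂ)) := by
  obtain ⟨k', rfl⟩ : ∃ k', k = k' + 1 := ⟨k - 1, by omega⟩
  obtain ⟨a, ha⟩ := key_dvd k'
  have hdeg : a.natDegree ≤ k' := by
    by_cases h0 : a = 0
    · simp [h0]
    · have h1 : ((X - 1) * (pp k')^2 + 1 : ℝ[X]).natDegree ≤ 2*k'+1 := by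
        apply le_trans (Polynomial.natDegree_add_le _ _)
        simp only [Polynomial.natDegree_one]
        refine max_le ?_ (by omega)
        apply le_trans Polynomial.natDegree_mul_le
        have hx1 : (X - 1 : ℝ[X]).natDegree ≤ 1 := by
          rw [show (1 : ℝ[X]) = C 1 from (Polynomial.C_1).symm,
            Polynomial.natDegree_X_sub_C]
        have hp2 : ((pp k')^2).natDegree ≤ 2*k' := by
          rw [Polynomial.natDegree_pow]
          have := pp_natDegree k'
          omega
        omega
      rw [ha, Polynomial.natDegree_mul (pow_ne_zero _ Polynomial.X_ne_zero) h0,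
        Polynomial.natDegree_X_pow] at h1
      omega
  refine ⟨MvPolynomial.map (algebraMap ℝ ℂ) (hpoly (pp k') k'),
    MvPolynomial.map (algebraMap ℝ ℂ) (MvPolynomial.C (1/2) * (hpoly a k' + 1)),
    MvPolynomial.C Complex.I *
      MvPolynomial.map (algebraMap ℝ ℂ) (MvPolynomial.C (1/2) * (hpoly a k' - 1)),
    fun n => im_coeff _ n, fun n => im_coeff _ n, ?_, ?_, ?_⟩
  · intro n
    rw [MvPolynomial.coeff_C_mul]
    have := im_coeff (MvPolynomial.C (1/2) * (hpoly a k' - 1)) n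
    set z := (MvPolynomial.map (algebraMap ℝ ℂ) (MvPolynomial.C (1/2) * (hpoly a k' - 1))).coeff n
    simp [Complex.mul_re, this]
  · intro s t
    have h1 : MvPolynomial.eval ![s, t] (MvPolynomial.map (algebraMap ℝ ℂ)
        (MvPolynomial.C (1/2) * (hpoly a k' + 1)))
        = ((1:ℂ)/2) * (MvPolynomial.eval ![s, t]
            (MvPolynomial.map (algebraMap ℝ ℂ) (hpoly a k')) + 1) := by
      simp only [map_mul, map_add, map_one, MvPolynomial.map_C, MvPolynomial.eval_C]
      norm_num
    have h2 : MvPolynomial.eval ![s, t] (MvPolynomial.C Complex.I *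
        MvPolynomial.map (algebraMap ℝ ℂ) (MvPolynomial.C (1/2) * (hpoly a k' - 1)))
        = Complex.I * (((1:ℂ)/2) * (MvPolynomial.eval ![s, t]
            (MvPolynomial.map (algebraMap ℝ ℂ) (hpoly a k')) - 1)) := by
      simp only [map_mul, map_sub, map_one, MvPolynomial.map_C, MvPolynomial.eval_C]
      norm_num
    rw [h1, h2]
    have hz : ∀ z : ℂ, ((1:ℂ)/2 * (z + 1)) ^ 2 + (Complex.I * ((1:ℂ)/2 * (z - 1))) ^ 2 = z := by
      intro z
      linear_combination ((1:ℂ)/2 * (z - 1))^2 * Complex.I_sq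
    rw [hz]
    have hexp : 2*(k'+1)-1 = 2*k'+1 := by omega
    rw [hexp, eval_map_hpoly, eval_map_hpoly]
    exact congrFun (main_id k' a ha hdeg t) s
  · intro t ht
    refine ⟨∑ n ∈ Finset.range (k'+1), cc n * t^n, ?_, ?_⟩
    · apply Finset.sum_pos'
      · intro i _
        exact mul_nonneg (cc_pos i).le (pow_nonneg ht i)
      · exact ⟨0, Finset.mem_range.mpr (by omega), by simp [cc]⟩
    · rw [eval_map_hpoly]
      push_cast
      apply Finset.sum_congr rfl
      intro n hn
      rw [pp_coeff, if_pos (Finset.mem_range.mp hn)]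
      simp
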